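/- Let P be a poset on [n], E an equivalence relation on I(P) with dual relation E*, 𝔽_q a finite field, and χ a nontrivial additive character of 𝔽_q. Let I, J be order ideals of P, and assume that for every order ideal K with (K,J) ∈ E one has |M(K^c)| = |M(J^c)| and |(K^c)_M| = |(J^c)_M|. Then for every u ∈ S_I: Σ_{v ∈ S_{J̄^c,E*}} χ(u·v) = (q−1)^{|M(J^c)|} q^{|(J^c)_M|} · Σ_{K : (K,J) ∈ E, I_M ∩ K^c = ∅} (−1/(q−1))^{|I ∩ K^c|}. (Proposition 3.8(i): the entry p_{J̄^c,Ī} of the matrix P_E.) -/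

import Mathlib

open scoped BigOperators
open Finset

noncomputable section
open scoped Classical

/-- `I ⊆ [n]` is an order ideal with respect to the order relation `le`. -/
def IsIdeal {n : ℕ} (le : Fin n → Fin n → Prop) (I : Finset (Fin n)) : Prop :=
  ∀ a ∈ I, ∀ b, le b a → b ∈ I

/-- `⟨X⟩_P` : the smallest order ideal (w.r.t. `le`) containing `X`. -/
def idealCl {n : ℕ} (le : Fin n → Fin n → Prop) (X : Finset (Fin n)) : Finset (Fin n) :=
  Finset.univ.filter fun b => ∃ a ∈ X, le b a

/-- `M(A)` : the set of maximal elements of `A` with respect to `le`. -/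
def maxSet {n : ℕ} (le : Fin n → Fin n → Prop) (A : Finset (Fin n)) : Finset (Fin n) :=
  A.filter fun a => ∀ b ∈ A, le a b → b = a

/-- `E` is an equivalence relation on the set of order ideals of the poset `le`. -/
def EqvOnIdeals {n : ℕ} (le : Fin n → Fin n → Prop)
    (E : Finset (Fin n) → Finset (Fin n) → Prop) : Prop :=
  (∀ I J, E I J → IsIdeal le I ∧ IsIdeal le J) ∧
  (∀ I, IsIdeal le I → E I I) ∧
  (∀ I J, E I J → E J I) ∧
  (∀ I J K, E I J → E J K → E I K)

/-- support of a vector -/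
def supp {n : ℕ} {F : Type} [Field F] [Fintype F] (v : Fin n → F) : Finset (Fin n) :=
  Finset.univ.filter fun i => v i ≠ 0

/-- standard dot product -/
def dot {n : ℕ} {F : Type} [Field F] [Fintype F] (u v : Fin n → F) : F := ∑ i, u i * v i

/-- the sphere `S_I = {v : ⟨supp v⟩_P = I}` -/
def sph {n : ℕ} (F : Type) [Field F] [Fintype F] (le : Fin n → Fin n → Prop)
    (I : Finset (Fin n)) : Finset (Fin n → F) :=
  Finset.univ.filter fun v => idealCl le (supp v) = I

/-- the dual sphere `S_{J^c} = {v : ⟨supp v⟩_{P*} = J^c}` -/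
def sphD {n : ℕ} (F : Type) [Field F] [Fintype F] (le : Fin n → Fin n → Prop)
    (J : Finset (Fin n)) : Finset (Fin n → F) :=
  Finset.univ.filter fun v => idealCl (fun a b => le b a) (supp v) = Jᶜ

/-- the `E`-sphere `S_{Ī,E} = {v : (⟨supp v⟩_P, I) ∈ E}` -/
def sphE {n : ℕ} (F : Type) [Field F] [Fintype F] (le : Fin n → Fin n → Prop)
    (E : Finset (Fin n) → Finset (Fin n) → Prop) (I : Finset (Fin n)) :
    Finset (Fin n → F) :=
  Finset.univ.filter fun v => E (idealCl le (supp v)) I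

/-- the `E*`-sphere `S_{J̄^c,E*} = {v : ⟨supp v⟩_{P*} = K^c for some ideal K with (K,J) ∈ E}` -/
def sphED {n : ℕ} (F : Type) [Field F] [Fintype F] (le : Fin n → Fin n → Prop)
    (E : Finset (Fin n) → Finset (Fin n) → Prop) (J : Finset (Fin n)) :
    Finset (Fin n → F) :=
  Finset.univ.filter fun v =>
    ∃ K, IsIdeal le K ∧ E K J ∧ idealCl (fun a b => le b a) (supp v) = Kᶜ

/-- the dual code `C^⊥` -/
def dualCode {n : ℕ} {F : Type} [Field F] [Fintype F] (C : Submodule F (Fin n → F)) :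
    Submodule F (Fin n → F) where
  carrier := {u | ∀ v ∈ C, dot u v = 0}
  zero_mem' := by intro v hv; simp [dot]
  add_mem' := by
    intro a b ha hb v hv
    have h1 := ha v hv
    have h2 := hb v hv
    simp only [dot, Pi.add_apply] at *
    simp [add_mul, Finset.sum_add_distrib, h1, h2]
  smul_mem' := by
    intro c a ha v hv
    have h1 := ha v hv
    simp only [dot, Pi.smul_apply, smul_eq_mul] at *
    simp [mul_assoc, ← Finset.mul_sum, h1]

/-- `A_{Ī,E}(C) = |C ∩ S_{Ī,E}|` -/
def AE {n : ℕ} {F : Type} [Field F] [Fintype F] (le : Fin n → Fin n → Prop)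
    (E : Finset (Fin n) → Finset (Fin n) → Prop)
    (C : Submodule F (Fin n → F)) (I : Finset (Fin n)) : ℕ :=
  ((sphE F le E I).filter fun v => v ∈ C).card

/-- `A_{J̄^c,E*}(D) = |D ∩ S_{J̄^c,E*}|` -/
def AED {n : ℕ} {F : Type} [Field F] [Fintype F] (le : Fin n → Fin n → Prop)
    (E : Finset (Fin n) → Finset (Fin n) → Prop)
    (D : Submodule F (Fin n → F)) (J : Finset (Fin n)) : ℕ :=
  ((sphED F le E J).filter fun v => v ∈ D).card

/-- `E` is a MacWilliams-type equivalence relation (w.r.t. the field `F`). -/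
def IsMacWilliamsType {n : ℕ} (F : Type) [Field F] [Fintype F]
    (le : Fin n → Fin n → Prop) (E : Finset (Fin n) → Finset (Fin n) → Prop) : Prop :=
  ∀ C₁ C₂ : Submodule F (Fin n → F),
    (∀ I, IsIdeal le I → AE le E C₁ I = AE le E C₂ I) →
    ∀ J, IsIdeal le J → AED le E (dualCode C₁) J = AED le E (dualCode C₂) J

/-- a hierarchical poset (ordinal sum of antichains) -/
def IsHierarchical {n : ℕ} (le : Fin n → Fin n → Prop) : Prop :=
  ∃ l : Fin n → ℕ, ∀ i j, (le i j ∧ i ≠ j) ↔ l i < l j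

/-- `σ` is an automorphism of the poset `le`. -/
def IsAut {n : ℕ} (le : Fin n → Fin n → Prop) (σ : Equiv.Perm (Fin n)) : Prop :=
  ∀ x y, le x y ↔ le (σ x) (σ y)

/-- `A` and `B` are order-isomorphic with the induced orders. -/
def OrdIso {n : ℕ} (le : Fin n → Fin n → Prop) (A B : Finset (Fin n)) : Prop :=
  ∃ e : {x // x ∈ A} ≃ {x // x ∈ B}, ∀ a b : {x // x ∈ A}, le ↑a ↑b ↔ le ↑(e a) ↑(e b)


section Aux

variable {n : ℕ} {le : Fin n → Fin n → Prop}

lemma mem_idealCl {X : Finset (Fin n)} {b : Fin n} :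
    b ∈ idealCl le X ↔ ∃ a ∈ X, le b a := by simp [idealCl]

lemma mem_maxSet {A : Finset (Fin n)} {a : Fin n} :
    a ∈ maxSet le A ↔ a ∈ A ∧ ∀ b ∈ A, le a b → b = a := by simp [maxSet]

lemma maxSet_subset {A : Finset (Fin n)} : maxSet le A ⊆ A := Finset.filter_subset _ _

lemma mem_supp {F : Type} [Field F] [Fintype F] {v : Fin n → F} {i : Fin n} :
    i ∈ supp v ↔ v i ≠ 0 := by simp [supp]

variable [IsPartialOrder (Fin n) le]

lemma lrefl (a : Fin n) : le a a := Std.Refl.refl a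

lemma ltrans {a b c : Fin n} (h1 : le a b) (h2 : le b c) : le a c := IsTrans.trans a b c h1 h2

lemma lantisymm {a b : Fin n} (h1 : le a b) (h2 : le b a) : a = b := Std.Antisymm.antisymm a b h1 h2

lemma subset_idealCl {X : Finset (Fin n)} : X ⊆ idealCl le X :=
  fun a ha => mem_idealCl.2 ⟨a, ha, lrefl a⟩

lemma exists_min (s : Finset (Fin n)) (hs : s.Nonempty) :
    ∃ m ∈ s, ∀ x ∈ s, le x m → x = m := by
  obtain ⟨m, hm, hmin⟩ := s.exists_min_image (fun y => (s.filter (fun x => le x y)).card) hs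
  refine ⟨m, hm, ?_⟩
  intro x hx hxm
  by_contra hne
  have hsub : s.filter (fun z => le z x) ⊆ s.filter (fun z => le z m) := by
    intro z hz
    rw [Finset.mem_filter] at *
    exact ⟨hz.1, ltrans hz.2 hxm⟩
  have hmem : m ∈ s.filter (fun z => le z m) := Finset.mem_filter.2 ⟨hm, lrefl m⟩
  have hnmem : m ∉ s.filter (fun z => le z x) := by
    rw [Finset.mem_filter]
    rintro ⟨-, hmx⟩
    exact hne (lantisymm hxm hmx)
  have hss : s.filter (fun z => le z x) ⊂ s.filter (fun z => le z m) :=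
    (Finset.ssubset_iff_of_subset hsub).2 ⟨m, hmem, hnmem⟩
  exact absurd (hmin x hx) (not_le.2 (Finset.card_lt_card hss))

lemma compl_mem {K : Finset (Fin n)} (hK : IsIdeal le K) {a b : Fin n}
    (ha : a ∈ Kᶜ) (hab : le a b) : b ∈ Kᶜ := by
  rw [Finset.mem_compl] at *
  exact fun hb => ha (hK b hb a hab)

lemma exists_min_below {K : Finset (Fin n)} (hK : IsIdeal le K) {b : Fin n} (hb : b ∈ Kᶜ) :
    ∃ m, m ∈ maxSet (fun a b => le b a) Kᶜ ∧ le m b := by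
  obtain ⟨m, hm, hmin⟩ := exists_min (le := le) (Kᶜ.filter (fun x => le x b))
    ⟨b, Finset.mem_filter.2 ⟨hb, lrefl b⟩⟩
  rw [Finset.mem_filter] at hm
  refine ⟨m, mem_maxSet.2 ⟨hm.1, ?_⟩, hm.2⟩
  intro x hx hxm
  exact hmin x (Finset.mem_filter.2 ⟨hx, ltrans hxm hm.2⟩) hxm

lemma mem_sphD_iff {F : Type} [Field F] [Fintype F] {K : Finset (Fin n)}
    (hK : IsIdeal le K) {v : Fin n → F} :
    v ∈ sphD F le K ↔ maxSet (fun a b => le b a) Kᶜ ⊆ supp v ∧ supp v ⊆ Kᶜ := by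
  simp only [sphD, Finset.mem_filter, Finset.mem_univ, true_and]
  constructor
  · intro h
    have hsub : supp v ⊆ Kᶜ := by
      intro a ha
      rw [← h]
      exact mem_idealCl.2 ⟨a, ha, lrefl a⟩
    refine ⟨?_, hsub⟩
    intro m hm
    have hm' := mem_maxSet.1 hm
    have hmem : m ∈ idealCl (fun a b => le b a) (supp v) := h ▸ hm'.1
    obtain ⟨a, hav, ham⟩ := mem_idealCl.1 hmem
    exact (hm'.2 a (hsub hav) ham) ▸ hav
  · rintro ⟨h1, h2⟩
    ext b
    rw [mem_idealCl]
    constructor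
    · rintro ⟨a, hav, hba⟩
      exact compl_mem hK (h2 hav) hba
    · intro hb
      obtain ⟨m, hm, hmb⟩ := exists_min_below hK hb
      exact ⟨m, h1 hm, hmb⟩

lemma supp_subset_of_cl {F : Type} [Field F] [Fintype F] {u : Fin n → F} {I : Finset (Fin n)}
    (hu : idealCl le (supp u) = I) : supp u ⊆ I := hu ▸ subset_idealCl

lemma maxSet_subset_supp {F : Type} [Field F] [Fintype F] {u : Fin n → F} {I : Finset (Fin n)}
    (hu : idealCl le (supp u) = I) : maxSet le I ⊆ supp u := by
  intro x hx
  have hx' := mem_maxSet.1 hx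
  have hmem : x ∈ idealCl le (supp u) := hu.symm ▸ hx'.1
  obtain ⟨a, hav, hxa⟩ := mem_idealCl.1 hmem
  exact (hx'.2 a (supp_subset_of_cl hu hav) hxa) ▸ hav

lemma L6a {F : Type} [Field F] [Fintype F] {u : Fin n → F} {I K : Finset (Fin n)}
    (hI : IsIdeal le I) (hK : IsIdeal le K) (hu : idealCl le (supp u) = I)
    (hcond : (I \ maxSet le I) ∩ Kᶜ = ∅) :
    supp u ∩ Kᶜ = I ∩ Kᶜ ∧ I ∩ Kᶜ ⊆ maxSet (fun a b => le b a) Kᶜ := by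
  have hmax : ∀ x, x ∈ I → x ∈ Kᶜ → x ∈ maxSet le I := by
    intro x hxI hxK
    by_contra h
    exact Finset.eq_empty_iff_forall_notMem.1 hcond x
      (Finset.mem_inter.2 ⟨Finset.mem_sdiff.2 ⟨hxI, h⟩, hxK⟩)
  constructor
  · apply Finset.Subset.antisymm
    · exact Finset.inter_subset_inter_right (supp_subset_of_cl hu)
    · intro x hx
      rw [Finset.mem_inter] at *
      exact ⟨maxSet_subset_supp hu (hmax x hx.1 hx.2), hx.2⟩
  · intro x hx
    rw [Finset.mem_inter] at hx
    refine mem_maxSet.2 ⟨hx.2, ?_⟩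
    intro y hyK hyx
    have hyI : y ∈ I := hI x hx.1 y hyx
    have := (mem_maxSet.1 (hmax y hyI hyK)).2 x hx.1 hyx
    exact this.symm

lemma L6b {F : Type} [Field F] [Fintype F] {u : Fin n → F} {I K : Finset (Fin n)}
    (hK : IsIdeal le K) (hu : idealCl le (supp u) = I)
    (hcond : (I \ maxSet le I) ∩ Kᶜ ≠ ∅) :
    ∃ i ∈ supp u, i ∈ Kᶜ ∧ i ∉ maxSet (fun a b => le b a) Kᶜ := by
  obtain ⟨x, hx⟩ := Finset.nonempty_iff_ne_empty.2 hcond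
  rw [Finset.mem_inter, Finset.mem_sdiff] at hx
  obtain ⟨⟨hxI, hxM⟩, hxK⟩ := hx
  have hxM' : ∃ b ∈ I, le x b ∧ b ≠ x := by
    by_contra h
    push_neg at h
    exact hxM (mem_maxSet.2 ⟨hxI, h⟩)
  obtain ⟨b, hbI, hxb, hbne⟩ := hxM'
  have hbK : b ∈ Kᶜ := compl_mem hK hxK hxb
  have hbmem : b ∈ idealCl le (supp u) := hu.symm ▸ hbI
  obtain ⟨a, hav, hba⟩ := mem_idealCl.1 hbmem
  have haK : a ∈ Kᶜ := compl_mem hK hbK hba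
  refine ⟨a, hav, haK, ?_⟩
  intro hM
  have hxa : le x a := ltrans hxb hba
  have := (mem_maxSet.1 hM).2 x hxK hxa
  subst this
  exact hbne (lantisymm hba hxb)

end Aux

section CharSec

variable {F : Type} [Field F] [Fintype F]

lemma char_sum_all (χ : AddChar F ℂ) (hχ1 : χ ≠ 1) (c : F) :
    ∑ x : F, χ (c * x) = if c = 0 then (Fintype.card F : ℂ) else 0 := by
  split_ifs with h
  · simp [h, Finset.card_univ]
  · have hprim := AddChar.IsPrimitive.of_ne_one hχ1
    have h2 := AddChar.sum_eq_zero_of_ne_one (hprim h)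
    simpa [AddChar.mulShift_apply] using h2

lemma char_sum_erase (χ : AddChar F ℂ) (hχ1 : χ ≠ 1) (c : F) :
    ∑ x ∈ Finset.univ.erase (0 : F), χ (c * x) =
      if c = 0 then (Fintype.card F : ℂ) - 1 else -1 := by
  have h := Finset.sum_erase_add Finset.univ (fun x => χ (c * x)) (Finset.mem_univ (0 : F))
  have h0 : χ (c * 0) = 1 := by rw [mul_zero]; exact AddChar.map_zero_eq_one χ
  have h' : ∑ x ∈ Finset.univ.erase (0 : F), χ (c * x) = (∑ x : F, χ (c * x)) - 1 := by
    rw [← h, h0]; ring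
  rw [h', char_sum_all χ hχ1]
  split_ifs <;> ring

lemma char_map_sum {ι : Type*} (χ : AddChar F ℂ) (s : Finset ι) (f : ι → F) :
    χ (∑ i ∈ s, f i) = ∏ i ∈ s, χ (f i) := by
  classical
  induction s using Finset.induction with
  | empty => simp
  | insert a s h ih => rw [Finset.sum_insert h, Finset.prod_insert h, AddChar.map_add_eq_mul, ih]

end CharSec

section KeyLem

variable {n : ℕ} {le : Fin n → Fin n → Prop} [IsPartialOrder (Fin n) le]

lemma sphD_sum {F : Type} [Field F] [Fintype F] (χ : AddChar F ℂ) (hχ1 : χ ≠ 1)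
    {K I : Finset (Fin n)} (hK : IsIdeal le K) (hI : IsIdeal le I)
    {u : Fin n → F} (hu : idealCl le (supp u) = I) :
    ∑ v ∈ sphD F le K, χ (dot u v) =
      if (I \ maxSet le I) ∩ Kᶜ = ∅ then
        ((Fintype.card F : ℂ) - 1) ^ (maxSet (fun a b => le b a) Kᶜ).card *
          (Fintype.card F : ℂ) ^ (Kᶜ \ maxSet (fun a b => le b a) Kᶜ).card *
          ((-1 : ℂ) / ((Fintype.card F : ℂ) - 1)) ^ (I ∩ Kᶜ).card
      else 0 := by
  set M : Finset (Fin n) := maxSet (fun a b => le b a) Kᶜ with hM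
  have hMK : M ⊆ Kᶜ := Finset.filter_subset _ _
  set t : Fin n → Finset F := fun i =>
    if i ∈ M then Finset.univ.erase 0 else if i ∈ Kᶜ then Finset.univ else {0} with ht
  have hsphD : sphD F le K = Fintype.piFinset t := by
    ext v
    rw [mem_sphD_iff hK, Fintype.mem_piFinset]
    constructor
    · rintro ⟨h1, h2⟩ i
      simp only [ht]
      split_ifs with hMi hKi
      · exact Finset.mem_erase.2 ⟨mem_supp.1 (h1 hMi), Finset.mem_univ _⟩
      · exact Finset.mem_univ _
      · refine Finset.mem_singleton.2 ?_
        by_contra hvi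
        exact hKi (h2 (mem_supp.2 hvi))
    · intro h
      constructor
      · intro i hi
        have hti := h i
        simp only [ht, if_pos (show i ∈ M from hi)] at hti
        exact mem_supp.2 (Finset.mem_erase.1 hti).1
      · intro i hi
        have hvi : v i ≠ 0 := mem_supp.1 hi
        have hti := h i
        by_contra hiK
        have hiM : i ∉ M := fun hm => hiK (hMK hm)
        simp only [ht, if_neg hiM, if_neg hiK] at hti
        exact hvi (Finset.mem_singleton.1 hti)
  have hprod : ∑ v ∈ sphD F le K, χ (dot u v) = ∏ i, ∑ x ∈ t i, χ (u i * x) := by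
    rw [hsphD, Finset.prod_univ_sum]
    apply Finset.sum_congr rfl
    intro v _
    rw [dot, char_map_sum]
  have hS : ∀ i, (∑ x ∈ t i, χ (u i * x)) =
      if i ∈ M then (if u i = 0 then (Fintype.card F : ℂ) - 1 else -1)
      else if i ∈ Kᶜ then (if u i = 0 then (Fintype.card F : ℂ) else 0)
      else 1 := by
    intro i
    by_cases hMi : i ∈ M
    · simp only [ht, if_pos hMi]
      exact char_sum_erase χ hχ1 (u i)
    · by_cases hKi : i ∈ Kᶜ
      · simp only [ht, if_neg hMi, if_pos hKi]
        exact char_sum_all χ hχ1 (u i)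
      · simp only [ht, if_neg hMi, if_neg hKi, Finset.sum_singleton, mul_zero]
        exact AddChar.map_zero_eq_one χ
  by_cases hcond : (I \ maxSet le I) ∩ Kᶜ = ∅
  · rw [if_pos hcond, hprod]
    obtain ⟨hsuppK, hIKM⟩ := L6a hI hK hu hcond
    have huz : ∀ i ∈ Kᶜ \ M, u i = 0 := by
      intro i hi
      rw [Finset.mem_sdiff] at hi
      by_contra h
      have hmem : i ∈ supp u ∩ Kᶜ := Finset.mem_inter.2 ⟨mem_supp.2 h, hi.1⟩
      rw [hsuppK] at hmem
      exact hi.2 (hIKM hmem)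
    have hstep1 : ∏ i, ∑ x ∈ t i, χ (u i * x) = ∏ i ∈ Kᶜ, ∑ x ∈ t i, χ (u i * x) := by
      refine (Finset.prod_subset (Finset.subset_univ Kᶜ) ?_).symm
      intro i _ hiK
      rw [hS i, if_neg (fun hm => hiK (hMK hm)), if_neg hiK]
    have hstep2 : ∏ i ∈ Kᶜ, ∑ x ∈ t i, χ (u i * x) =
        (∏ i ∈ Kᶜ \ M, ∑ x ∈ t i, χ (u i * x)) * ∏ i ∈ M, ∑ x ∈ t i, χ (u i * x) :=
      (Finset.prod_sdiff hMK).symm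
    have hstep3 : ∏ i ∈ Kᶜ \ M, ∑ x ∈ t i, χ (u i * x) =
        (Fintype.card F : ℂ) ^ (Kᶜ \ M).card := by
      rw [← Finset.prod_const]
      apply Finset.prod_congr rfl
      intro i hi
      have hi' := Finset.mem_sdiff.1 hi
      rw [hS i, if_neg hi'.2, if_pos hi'.1, if_pos (huz i hi)]
    have hfneq : M.filter (fun i => ¬ u i = 0) = I ∩ Kᶜ := by
      ext i
      rw [Finset.mem_filter]
      constructor
      · rintro ⟨hiM, hiu⟩
        rw [← hsuppK]
        exact Finset.mem_inter.2 ⟨mem_supp.2 hiu, hMK hiM⟩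
      · intro hi
        refine ⟨hIKM hi, ?_⟩
        rw [← hsuppK] at hi
        exact mem_supp.1 (Finset.mem_inter.1 hi).1
    have hfeq : M.filter (fun i => u i = 0) = M \ (I ∩ Kᶜ) := by
      ext i
      rw [Finset.mem_filter, Finset.mem_sdiff]
      constructor
      · rintro ⟨hiM, hiu⟩
        refine ⟨hiM, fun hi => ?_⟩
        rw [← hsuppK] at hi
        exact mem_supp.1 (Finset.mem_inter.1 hi).1 hiu
      · rintro ⟨hiM, hi⟩
        refine ⟨hiM, ?_⟩
        by_contra hiu
        exact hi (by rw [← hsuppK]; exact Finset.mem_inter.2 ⟨mem_supp.2 hiu, hMK hiM⟩)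
    have hk_le : (I ∩ Kᶜ).card ≤ M.card := Finset.card_le_card hIKM
    have hstep4 : ∏ i ∈ M, ∑ x ∈ t i, χ (u i * x) =
        ((Fintype.card F : ℂ) - 1) ^ (M.card - (I ∩ Kᶜ).card) * (-1 : ℂ) ^ (I ∩ Kᶜ).card := by
      have : ∏ i ∈ M, ∑ x ∈ t i, χ (u i * x) =
          ∏ i ∈ M, (if u i = 0 then (Fintype.card F : ℂ) - 1 else -1) := by
        apply Finset.prod_congr rfl
        intro i hi
        rw [hS i, if_pos hi]
      rw [this, Finset.prod_ite, Finset.prod_const, Finset.prod_const, hfneq, hfeq,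
        Finset.card_sdiff_of_subset hIKM]
    have hq1 : ((Fintype.card F : ℂ) - 1) ≠ 0 := by
      have h2 : (1 : ℕ) < Fintype.card F := Fintype.one_lt_card
      have : (Fintype.card F : ℂ) ≠ 1 := by exact_mod_cast h2.ne'
      exact sub_ne_zero.2 this
    rw [hstep1, hstep2, hstep3, hstep4]
    have hpow : ((Fintype.card F : ℂ) - 1) ^ M.card =
        ((Fintype.card F : ℂ) - 1) ^ (M.card - (I ∩ Kᶜ).card) *
          ((Fintype.card F : ℂ) - 1) ^ (I ∩ Kᶜ).card := by
      rw [← pow_add, Nat.sub_add_cancel hk_le]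
    rw [hpow, div_pow]
    field_simp
  · rw [if_neg hcond, hprod]
    obtain ⟨i, hiu, hiK, hiM⟩ := L6b hK hu hcond
    apply Finset.prod_eq_zero (Finset.mem_univ i)
    rw [hS i, if_neg hiM, if_pos hiK, if_neg (mem_supp.1 hiu)]

end KeyLem

/-- Proposition 3.8(i): the entry `p_{J̄^c,Ī}` of the matrix `P_E`. -/
theorem stmt_11 {n : ℕ} (hn : 0 < n) (le : Fin n → Fin n → Prop)
    [IsPartialOrder (Fin n) le]
    (E : Finset (Fin n) → Finset (Fin n) → Prop) (hE : EqvOnIdeals le E)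
    (F : Type) [Field F] [Fintype F] (χ : AddChar F ℂ) (hχ : ∃ a, χ a ≠ 1)
    (I J : Finset (Fin n)) (hI : IsIdeal le I) (hJ : IsIdeal le J)
    (hcard : ∀ K : Finset (Fin n), E K J →
      (maxSet (fun a b => le b a) Kᶜ).card = (maxSet (fun a b => le b a) Jᶜ).card ∧
      (Kᶜ \ maxSet (fun a b => le b a) Kᶜ).card = (Jᶜ \ maxSet (fun a b => le b a) Jᶜ).card) :
    ∀ u ∈ sph F le I,
      ∑ v ∈ sphED F le E J, χ (dot u v) =
        ((Fintype.card F : ℂ) - 1) ^ (maxSet (fun a b => le b a) Jᶜ).card *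
          (Fintype.card F : ℂ) ^ (Jᶜ \ maxSet (fun a b => le b a) Jᶜ).card *
          ∑ K ∈ Finset.univ.filter
              (fun K : Finset (Fin n) =>
                IsIdeal le K ∧ E K J ∧ (I \ maxSet le I) ∩ Kᶜ = ∅),
            ((-1 : ℂ) / ((Fintype.card F : ℂ) - 1)) ^ (I ∩ Kᶜ).card := by
  intro u hu
  have hχ1 : χ ≠ 1 := AddChar.ne_one_iff.2 hχ
  have hu' : idealCl le (supp u) = I := by
    simpa [sph] using hu
  have hpart : sphED F le E J =
      (Finset.univ.filter fun K => IsIdeal le K ∧ E K J).biUnion (fun K => sphD F le K) := by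
    ext v
    simp only [sphED, sphD, Finset.mem_filter, Finset.mem_univ, true_and, Finset.mem_biUnion]
    constructor
    · rintro ⟨K, h1, h2, h3⟩; exact ⟨K, ⟨h1, h2⟩, h3⟩
    · rintro ⟨K, ⟨h1, h2⟩, h3⟩; exact ⟨K, h1, h2, h3⟩
  have hdisj : ((Finset.univ.filter fun K => IsIdeal le K ∧ E K J) : Set (Finset (Fin n))).PairwiseDisjoint
      (fun K => sphD F le K) := by
    intro K _ K' _ hne
    apply Finset.disjoint_left.2
    intro v hv hv'
    simp only [sphD, Finset.mem_filter] at hv hv'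
    exact hne (compl_inj_iff.1 (hv.2.symm.trans hv'.2))
  rw [hpart, Finset.sum_biUnion hdisj]
  have hsum1 : ∀ K ∈ Finset.univ.filter fun K => IsIdeal le K ∧ E K J,
      (∑ v ∈ sphD F le K, χ (dot u v)) =
      if (I \ maxSet le I) ∩ Kᶜ = ∅ then
        ((Fintype.card F : ℂ) - 1) ^ (maxSet (fun a b => le b a) Kᶜ).card *
          (Fintype.card F : ℂ) ^ (Kᶜ \ maxSet (fun a b => le b a) Kᶜ).card *
          ((-1 : ℂ) / ((Fintype.card F : ℂ) - 1)) ^ (I ∩ Kᶜ).card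
      else 0 := by
    intro K hKmem
    rw [Finset.mem_filter] at hKmem
    exact sphD_sum χ hχ1 hKmem.2.1 hI hu'
  rw [Finset.sum_congr rfl hsum1, ← Finset.sum_filter]
  rw [Finset.filter_filter]
  have hsetEq : (Finset.univ.filter fun K => (IsIdeal le K ∧ E K J) ∧ (I \ maxSet le I) ∩ Kᶜ = ∅)
      = Finset.univ.filter fun K : Finset (Fin n) =>
          IsIdeal le K ∧ E K J ∧ (I \ maxSet le I) ∩ Kᶜ = ∅ := by
    apply Finset.filter_congr
    intro K _
    tauto
  rw [hsetEq, Finset.mul_sum]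
  apply Finset.sum_congr rfl
  intro K hKmem
  rw [Finset.mem_filter] at hKmem
  rw [(hcard K hKmem.2.2.1).1, (hcard K hKmem.2.2.1).2]

end
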